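/- Let η = η₁ = Σ_{h ∈ H} ζ^h be the Gauss period of the identity coset, where H has order f and e = (λ−1)/f. Then the degree of the field extension [K : ℚ(η)] equals f. -/

import Mathlib

open scoped BigOperators

/-- The Gauss period `η_c = ∑_{h ∈ H} ζ^(c·h)` attached to a unit `c` modulo `λ`. -/
noncomputable def gaussPeriod (l : ℕ+) (ζ : CyclotomicField l ℚ)
    (H : Subgroup (ZMod (l : ℕ))ˣ) [Fintype H] (c : (ZMod (l : ℕ))ˣ) :
    CyclotomicField l ℚ :=
  ∑ h : H, ζ ^ (((c * (h : (ZMod (l : ℕ))ˣ) : (ZMod (l : ℕ))ˣ) : ZMod (l : ℕ)).val)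

section Aux

variable {l : ℕ+} (hl : (l : ℕ).Prime) {ζ : CyclotomicField l ℚ}
  (hζ : IsPrimitiveRoot ζ l) (H : Subgroup (ZMod (l : ℕ))ˣ) [Fintype H]

include hζ in
lemma gp_pow_val (a b : (ZMod (l : ℕ))ˣ) :
    ζ ^ ((a : ZMod (l : ℕ)).val * (b : ZMod (l : ℕ)).val)
      = ζ ^ (((a * b : (ZMod (l : ℕ))ˣ) : ZMod (l : ℕ)).val) := by
  haveI : NeZero (l : ℕ) := ⟨l.pos.ne'⟩
  rw [pow_eq_pow_mod _ hζ.pow_eq_one, Units.val_mul, ZMod.val_mul]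

include hζ in
lemma gp_map (σ : CyclotomicField l ℚ ≃ₐ[ℚ] CyclotomicField l ℚ) [NeZero (l : ℕ)] :
    σ (gaussPeriod l ζ H 1) = gaussPeriod l ζ H (hζ.autToPow ℚ σ) := by
  unfold gaussPeriod
  rw [map_sum]
  refine Finset.sum_congr rfl fun h _ => ?_
  rw [map_pow, ← hζ.autToPow_spec ℚ σ, ← pow_mul, one_mul, gp_pow_val hζ]

lemma gp_mem {c : (ZMod (l : ℕ))ˣ} (hc : c ∈ H) :
    gaussPeriod l ζ H c = gaussPeriod l ζ H 1 := by
  unfold gaussPeriod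
  refine Fintype.sum_equiv (Equiv.mulLeft (⟨c, hc⟩ : H)) _ _ fun h => ?_
  simp [one_mul, mul_assoc]

include hl hζ in
lemma gp_inj (c : (ZMod (l : ℕ))ˣ)
    (hc : gaussPeriod l ζ H c = gaussPeriod l ζ H 1) : c ∈ H := by
  classical
  by_contra hcH
  haveI : Fact ((l : ℕ).Prime) := ⟨hl⟩
  haveI : NeZero ((l : ℕ)) := ⟨hl.pos.ne'⟩
  haveI : IsCyclotomicExtension {(l : ℕ)} ℚ (CyclotomicField l ℚ) :=
    CyclotomicField.isCyclotomicExtension l ℚ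
  have hirr : Irreducible (Polynomial.cyclotomic (l : ℕ) ℚ) :=
    Polynomial.cyclotomic.irreducible_rat l.pos
  set v : (ZMod (l : ℕ))ˣ → CyclotomicField l ℚ :=
    fun a => ζ ^ ((a : ZMod (l : ℕ)).val) with hv
  -- the family v is linearly independent
  set pb := IsPrimitiveRoot.powerBasis ℚ hζ with hpb
  have hdim : pb.dim = (l : ℕ) - 1 := by
    have h1 : pb.dim = Module.finrank ℚ (CyclotomicField l ℚ) := pb.finrank.symm
    rw [h1, IsCyclotomicExtension.finrank (CyclotomicField l ℚ) hirr, Nat.totient_prime hl]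
  have hval0 : ∀ a : (ZMod (l : ℕ))ˣ, (a : ZMod (l : ℕ)).val ≠ 0 := fun a => by
    simp [ZMod.val_eq_zero, a.ne_zero]
  have hvallt : ∀ a : (ZMod (l : ℕ))ˣ, (a : ZMod (l : ℕ)).val < (l : ℕ) := fun a =>
    ZMod.val_lt _
  set g : (ZMod (l : ℕ))ˣ → Fin pb.dim := fun a =>
    ⟨(a : ZMod (l : ℕ)).val - 1, by
      have := hval0 a; have := hvallt a; omega⟩ with hg
  have hginj : Function.Injective g := by
    intro a b hab
    have h1 : (a : ZMod (l : ℕ)).val - 1 = (b : ZMod (l : ℕ)).val - 1 := by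
      simpa [hg] using congrArg Fin.val hab
    have := hval0 a; have := hval0 b
    have h2 : (a : ZMod (l : ℕ)).val = (b : ZMod (l : ℕ)).val := by omega
    exact Units.ext (ZMod.val_injective _ h2)
  have li0 : LinearIndependent ℚ (⇑pb.basis ∘ g) :=
    pb.basis.linearIndependent.comp g hginj
  have hζ0 : ζ ≠ 0 := hζ.ne_zero hl.pos.ne'
  have hmulinj : Function.Injective (LinearMap.mulLeft ℚ ζ) := fun x y hxy => by
    simpa using mul_left_cancel₀ hζ0 (by simpa using hxy)
  have li1 : LinearIndependent ℚ (⇑(LinearMap.mulLeft ℚ ζ) ∘ (⇑pb.basis ∘ g)) :=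
    li0.map' _ (LinearMap.ker_eq_bot.mpr hmulinj)
  have hfam : (⇑(LinearMap.mulLeft ℚ ζ) ∘ (⇑pb.basis ∘ g)) = v := by
    funext a
    have := hval0 a
    simp only [Function.comp_apply, LinearMap.mulLeft_apply, hpb, hg,
      PowerBasis.coe_basis, IsPrimitiveRoot.powerBasis_gen, hv]
    rw [← pow_succ']
    congr 1
    omega
  rw [hfam] at li1
  -- build the linear relation
  rw [linearIndependent_iff] at li1
  set s : (ZMod (l : ℕ))ˣ →₀ ℚ :=
    (∑ h : H, Finsupp.single ((c * (h : (ZMod (l : ℕ))ˣ))) (1 : ℚ))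
      - ∑ h : H, Finsupp.single ((h : (ZMod (l : ℕ))ˣ)) (1 : ℚ) with hs
  have hcomb : Finsupp.linearCombination ℚ v s = 0 := by
    have hc' : ∑ h : H, v (c * (h : (ZMod (l : ℕ))ˣ)) = ∑ h : H, v (h : (ZMod (l : ℕ))ˣ) := by
      have := hc
      unfold gaussPeriod at this
      simpa [hv, one_mul] using this
    simp [hs, map_sub, map_sum, Finsupp.linearCombination_single, hc']
  have hs0 : s = 0 := li1 s hcomb
  have := DFunLike.congr_fun hs0 c
  rw [hs] at this
  simp only [Finsupp.sub_apply, Finsupp.coe_zero, Pi.zero_apply,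
    Finsupp.finset_sum_apply, Finsupp.single_apply] at this
  have h1 : (∑ h : H, if c * (h : (ZMod (l : ℕ))ˣ) = c then (1 : ℚ) else 0) = 1 := by
    have : ∀ h : H, (if c * (h : (ZMod (l : ℕ))ˣ) = c then (1 : ℚ) else 0)
        = if h = 1 then (1 : ℚ) else 0 := by
      intro h
      congr 1
      simp [mul_eq_left]
    simp only [this]
    simp
  have h2 : (∑ h : H, if ((h : (ZMod (l : ℕ))ˣ)) = c then (1 : ℚ) else 0) = 0 := by
    refine Finset.sum_eq_zero fun h _ => ?_
    have : ((h : (ZMod (l : ℕ))ˣ)) ≠ c := fun hh => hcH (hh ▸ h.2)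
    simp [this]
  rw [h1, h2] at this
  norm_num at this

end Aux

/-- The cyclotomic field has degree `f` over the field `ℚ(η)` generated by the Gauss
period `η = η₁` attached to a subgroup `H` of order `f`. -/
theorem finrank_over_adjoin_gaussPeriod (l : ℕ+) (hl : (l : ℕ).Prime)
    (ζ : CyclotomicField l ℚ) (hζ : IsPrimitiveRoot ζ l)
    (H : Subgroup (ZMod (l : ℕ))ˣ) [Fintype H] (f e : ℕ) (hf : Fintype.card H = f)
    (he : e = ((l : ℕ) - 1) / f) :
    Module.finrank (IntermediateField.adjoin ℚ {gaussPeriod l ζ H 1})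
      (CyclotomicField l ℚ) = f := by
  classical
  haveI : Fact ((l : ℕ).Prime) := ⟨hl⟩
  haveI : NeZero ((l : ℕ)) := ⟨hl.pos.ne'⟩
  haveI : IsCyclotomicExtension {(l : ℕ)} ℚ (CyclotomicField l ℚ) :=
    CyclotomicField.isCyclotomicExtension l ℚ
  have hirr : Irreducible (Polynomial.cyclotomic (l : ℕ) ℚ) :=
    Polynomial.cyclotomic.irreducible_rat l.pos
  haveI : FiniteDimensional ℚ (CyclotomicField l ℚ) :=
    IsCyclotomicExtension.finiteDimensional {(l : ℕ)} ℚ (CyclotomicField l ℚ)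
  haveI : IsGalois ℚ (CyclotomicField l ℚ) :=
    IsCyclotomicExtension.isGalois {(l : ℕ)} ℚ (CyclotomicField l ℚ)
  set φ := hζ.autToPow ℚ with hφ
  have hφinj : Function.Injective φ := hζ.autToPow_injective ℚ
  have hcard : Fintype.card (CyclotomicField l ℚ ≃ₐ[ℚ] CyclotomicField l ℚ) = Fintype.card (ZMod (l : ℕ))ˣ := by
    rw [← Nat.card_eq_fintype_card, IsGalois.card_aut_eq_finrank, IsCyclotomicExtension.finrank (CyclotomicField l ℚ) hirr,
      ZMod.card_units_eq_totient]
  have hφbij : Function.Bijective φ :=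
    (Fintype.bijective_iff_injective_and_card φ).mpr ⟨hφinj, hcard⟩
  set G := H.comap (φ : (CyclotomicField l ℚ ≃ₐ[ℚ] CyclotomicField l ℚ) →* (ZMod (l : ℕ))ˣ) with hG
  set η := gaussPeriod l ζ H 1 with hη
  have hfix : (IntermediateField.adjoin ℚ {η}).fixingSubgroup = G := by
    apply le_antisymm
    · intro σ hσ
      have hση : σ η = η := (IntermediateField.mem_fixingSubgroup_iff _ σ).mp hσ η
        (IntermediateField.mem_adjoin_simple_self ℚ η)
      have hgp : gaussPeriod l ζ H (φ σ) = gaussPeriod l ζ H 1 := by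
        rw [← gp_map hζ H σ]; exact hση
      exact Subgroup.mem_comap.mpr (gp_inj hl hζ H _ hgp)
    · rw [← IntermediateField.le_iff_le, IntermediateField.adjoin_le_iff]
      intro x hx
      rcases Set.mem_singleton_iff.mp hx with rfl
      rintro ⟨σ, hσ⟩
      show σ • η = η
      rw [AlgEquiv.smul_def, hη, gp_map hζ H σ]
      exact gp_mem H (Subgroup.mem_comap.mp hσ)
  have hcardG : Fintype.card G = Fintype.card H :=
    Fintype.card_congr (Equiv.subtypeEquiv (Equiv.ofBijective φ hφbij)
      (fun σ => Subgroup.mem_comap))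
  have hmain := IsGalois.card_fixingSubgroup_eq_finrank
    (IntermediateField.adjoin ℚ {η}) (F := ℚ) (E := CyclotomicField l ℚ)
  rw [← hmain]
  rw [show (IntermediateField.adjoin ℚ {η}).fixingSubgroup = G from hfix] at *
  rw [Nat.card_eq_fintype_card, hcardG, hf]
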